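/- arXiv:1709.03518 — 4 statements merged into one kernel-verified Lean document; each statement's English description precedes it below -/
import Mathlib

section
/- Let d > 1 be an integer and m : Fin n → ℤ with all mᵢ ≥ 0, satisfying (d-1)(d-2)/2 - ∑ mᵢ(mᵢ-1)/2 = 0 and -2 ≤ d² - ∑ mᵢ² ≤ 1. Then mᵢ < d for every i. -/
theorem mult_lt_degree (n : ℕ) (d : ℤ) (m : Fin n → ℤ)
    (hd : 1 < d) (hm : ∀ i, 0 ≤ m i)
    (hb : (d - 1) * (d - 2) / 2 - ∑ i, m i * (m i - 1) / 2 = 0)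
    (hc1 : -2 ≤ d ^ 2 - ∑ i, (m i) ^ 2)
    (hc2 : d ^ 2 - ∑ i, (m i) ^ 2 ≤ 1) :
    ∀ i, m i < d := by
  have hterm : ∀ i, 0 ≤ m i * (m i - 1) := by
    intro i
    rcases (hm i).lt_or_eq with h | h
    · exact mul_nonneg (hm i) (by omega)
    · simp [← h]
  have hdvd : ∀ x : ℤ, (2 : ℤ) ∣ x * (x - 1) := by
    intro x
    rcases Int.even_or_odd x with h | h
    · exact h.two_dvd.mul_right _
    · exact (Int.even_sub_one.mpr (Int.not_even_iff_odd.mpr h)).two_dvd.mul_left _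
  -- Multiply hb by 2: sum of m i * (m i - 1) equals (d-1)(d-2)
  have key : ∑ i, m i * (m i - 1) = (d - 1) * (d - 2) := by
    have h1 : (d - 1) * (d - 2) / 2 = ∑ i, m i * (m i - 1) / 2 := by linarith [hb]
    have h2 : ((d - 1) * (d - 2) / 2) * 2 = (d - 1) * (d - 2) :=
      Int.ediv_mul_cancel (by simpa [show d - 1 - 1 = d - 2 from by ring] using hdvd (d - 1))
    have h3 : (∑ i, m i * (m i - 1) / 2) * 2 = ∑ i, m i * (m i - 1) := by
      rw [Finset.sum_mul]
      exact Finset.sum_congr rfl fun i _ => Int.ediv_mul_cancel (hdvd (m i))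
    rw [h1, h3] at h2
    exact h2
  intro i
  by_contra hcon
  push_neg at hcon
  have hsingle : m i * (m i - 1) ≤ ∑ j, m j * (m j - 1) :=
    Finset.single_le_sum (fun j _ => hterm j) (Finset.mem_univ i)
  nlinarith [hcon, hd, hsingle, key]
end

section
/- (Noether's lemma) Let d > 0 be an integer and m : Fin n → ℤ with all mᵢ ≥ 0, satisfying the genus-0 condition (d-1)(d-2)/2 - ∑ mᵢ(mᵢ-1)/2 = 0 and -2 ≤ c ≤ 1 where c = d² - ∑ mᵢ². If d = 1 assume additionally c < 0. Then there exist three distinct indices i₁, i₂, i₃ with m_{i₁} + m_{i₂} + m_{i₃} > d. -/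
set_option maxHeartbeats 1000000


/-- Noether's lemma. -/
theorem noether_lemma (n : ℕ) (hn : 3 ≤ n) (d : ℤ) (m : Fin n → ℤ)
    (hd : 0 < d) (hm : ∀ i, 0 ≤ m i)
    (hb : (d - 1) * (d - 2) / 2 - ∑ i, m i * (m i - 1) / 2 = 0)
    (hc1 : -2 ≤ d ^ 2 - ∑ i, (m i) ^ 2)
    (hc2 : d ^ 2 - ∑ i, (m i) ^ 2 ≤ 1)
    (hd1 : d = 1 → d ^ 2 - ∑ i, (m i) ^ 2 < 0) :
    ∃ i₁ i₂ i₃ : Fin n, i₁ ≠ i₂ ∧ i₁ ≠ i₃ ∧ i₂ ≠ i₃ ∧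
      d < m i₁ + m i₂ + m i₃ := by
  classical
  -- Remove the divisions from the genus condition.
  have hgen : ∑ i, m i * (m i - 1) = (d - 1) * (d - 2) := by
    have h2 : ∀ i : Fin n, 2 * (m i * (m i - 1) / 2) = m i * (m i - 1) := by
      intro i
      refine Int.two_mul_ediv_two_of_even ?_
      have := Int.even_mul_succ_self (m i - 1)
      have h : (m i - 1) * (m i - 1 + 1) = m i * (m i - 1) := by ring
      rwa [h] at this
    have hd2 : 2 * ((d - 1) * (d - 2) / 2) = (d - 1) * (d - 2) := by
      refine Int.two_mul_ediv_two_of_even ?_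
      have := Int.even_mul_succ_self (d - 2)
      have h : (d - 2) * (d - 2 + 1) = (d - 1) * (d - 2) := by ring
      rwa [h] at this
    have hsum : 2 * ∑ i, m i * (m i - 1) / 2 = ∑ i, m i * (m i - 1) := by
      rw [Finset.mul_sum]
      exact Finset.sum_congr rfl fun i _ => h2 i
    have : (d - 1) * (d - 2) / 2 = ∑ i, m i * (m i - 1) / 2 := by linarith
    calc ∑ i, m i * (m i - 1) = 2 * ∑ i, m i * (m i - 1) / 2 := hsum.symm
      _ = 2 * ((d - 1) * (d - 2) / 2) := by rw [this]
      _ = (d - 1) * (d - 2) := hd2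
  -- relation between sum of squares and sum
  have hS : ∑ i, (m i) ^ 2 = (∑ i, m i) + (d - 1) * (d - 2) := by
    have : ∑ i, (m i) ^ 2 = ∑ i, (m i * (m i - 1) + m i) := by
      exact Finset.sum_congr rfl fun i _ => by ring
    rw [this, Finset.sum_add_distrib, hgen]; ring
  -- pick the three largest values
  have hne : (Finset.univ : Finset (Fin n)).Nonempty := by
    refine ⟨⟨0, by omega⟩, Finset.mem_univ _⟩
  obtain ⟨i₁, -, h₁⟩ := Finset.exists_max_image Finset.univ m hne
  set s₁ := (Finset.univ : Finset (Fin n)).erase i₁ with hs₁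
  have hs₁ne : s₁.Nonempty := by
    rw [← Finset.card_pos, hs₁, Finset.card_erase_of_mem (Finset.mem_univ _),
      Finset.card_univ, Fintype.card_fin]
    omega
  obtain ⟨i₂, hi₂, h₂⟩ := Finset.exists_max_image s₁ m hs₁ne
  set s₂ := s₁.erase i₂ with hs₂
  have hs₂ne : s₂.Nonempty := by
    rw [← Finset.card_pos, hs₂, Finset.card_erase_of_mem hi₂, hs₁,
      Finset.card_erase_of_mem (Finset.mem_univ _), Finset.card_univ, Fintype.card_fin]
    omega
  obtain ⟨i₃, hi₃, h₃⟩ := Finset.exists_max_image s₂ m hs₂ne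
  have h21 : i₂ ≠ i₁ := Finset.ne_of_mem_erase hi₂
  have h32 : i₃ ≠ i₂ := Finset.ne_of_mem_erase hi₃
  have hi₃s₁ : i₃ ∈ s₁ := Finset.mem_of_mem_erase hi₃
  have h31 : i₃ ≠ i₁ := Finset.ne_of_mem_erase hi₃s₁
  refine ⟨i₁, i₂, i₃, h21.symm, h31.symm, h32.symm, ?_⟩
  by_contra hcon
  push_neg at hcon
  set a := m i₁ with ha
  set b := m i₂ with hbdef
  set e := m i₃ with he
  have hab : b ≤ a := h₁ i₂ (Finset.mem_univ _)
  have hbe : e ≤ b := h₂ i₃ hi₃s₁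
  have he0 : 0 ≤ e := hm i₃
  -- tail sums
  set T := ∑ j ∈ s₂, m j with hT
  set Q := ∑ j ∈ s₂, (m j) ^ 2 with hQ
  have e1 : m i₁ + ∑ j ∈ s₁, m j = ∑ i, m i :=
    Finset.add_sum_erase _ m (Finset.mem_univ i₁)
  have e2 : m i₂ + ∑ j ∈ s₂, m j = ∑ j ∈ s₁, m j := Finset.add_sum_erase s₁ m hi₂
  have f1 : (m i₁) ^ 2 + ∑ j ∈ s₁, (m j) ^ 2 = ∑ i, (m i) ^ 2 :=
    Finset.add_sum_erase _ (fun j => (m j) ^ 2) (Finset.mem_univ i₁)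
  have f2 : (m i₂) ^ 2 + ∑ j ∈ s₂, (m j) ^ 2 = ∑ j ∈ s₁, (m j) ^ 2 :=
    Finset.add_sum_erase s₁ (fun j => (m j) ^ 2) hi₂
  have hsum1 : ∑ i, m i = a + b + T := by rw [hT, ← e1, ← e2, ha, hbdef]; ring
  have hsum2 : ∑ i, (m i) ^ 2 = a ^ 2 + b ^ 2 + Q := by
    rw [hQ, ← f1, ← f2, ha, hbdef]; ring
  clear_value a b e T Q
  have heT : e ≤ T := by rw [hT, he]; exact Finset.single_le_sum (fun j _ => hm j) hi₃
  have hTQ : T ≤ Q := by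
    rw [hT, hQ]
    refine Finset.sum_le_sum fun j _ => ?_
    nlinarith [hm j]
  have hQeT : Q ≤ e * T := by
    rw [hT, hQ, Finset.mul_sum]
    refine Finset.sum_le_sum fun j hj => ?_
    have hje : m j ≤ e := h₃ j hj
    nlinarith [hm j]
  -- the negated conclusion
  have habe : a + b + e ≤ d := hcon
  -- T ≥ 1
  have hT1 : 1 ≤ T := by
    rcases eq_or_lt_of_le (by omega : (1:ℤ) ≤ d) with h1 | h2
    · have := hd1 h1.symm
      rw [hsum2] at this
      rw [hsum1] at hS
      rw [hsum2] at hS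
      nlinarith
    · rw [hsum1, hsum2] at hS
      rw [hsum2] at hc2
      nlinarith
  -- e ≥ 1
  have he1 : 1 ≤ e := by nlinarith [hTQ, hQeT, hT1]
  have hae : e ≤ a := le_trans hbe hab
  -- main contradiction
  rw [hsum1, hsum2] at hS
  rw [hsum2] at hc1
  have p1 : 0 ≤ (a - e) * (b - e) := mul_nonneg (by linarith) (by linarith)
  have hd3e : 0 ≤ d - 3 * e := by linarith
  have hdes : 0 ≤ d - e - (a + b) := by linarith
  have p2 : 0 ≤ (d - e - (a + b)) * (d - 3 * e) := mul_nonneg hdes hd3e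
  have p3 : 0 ≤ (d - e - (a + b)) * (a + b - e) := mul_nonneg hdes (by linarith)
  have p4 : 0 ≤ (e - 1) * (3 * d - (a + b + T)) := by
    refine mul_nonneg (by linarith) ?_
    nlinarith
  have p5 : 0 ≤ e * (d - 3 * e) := mul_nonneg he0 hd3e
  linarith [hQeT, hS, p1, p2, p3, p4, p5,
    sq_nonneg (a - e), sq_nonneg (b - e)]
end

section
/- Let d > 0 and m : Fin n → ℤ with all mᵢ ≥ 0 satisfy d² - ∑ mᵢ² = -1 and (d-1)(d-2)/2 - ∑ mᵢ(mᵢ-1)/2 = 0. Then there exist three distinct indices i₁, i₂, i₃ with m_{i₁} + m_{i₂} + m_{i₃} > d. -/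
/-- Noether's lemma for numerical (-1)-classes. -/
theorem noether_lemma_neg_one (n : ℕ) (hn : 3 ≤ n) (d : ℤ) (m : Fin n → ℤ)
    (hd : 0 < d) (hm : ∀ i, 0 ≤ m i)
    (ha : d ^ 2 - ∑ i, (m i) ^ 2 = -1)
    (hb : (d - 1) * (d - 2) / 2 - ∑ i, m i * (m i - 1) / 2 = 0) :
    ∃ i₁ i₂ i₃ : Fin n, i₁ ≠ i₂ ∧ i₁ ≠ i₃ ∧ i₂ ≠ i₃ ∧
      d < m i₁ + m i₂ + m i₃ := by
  have hdvd : ∀ x : ℤ, (2:ℤ) ∣ x * (x - 1) := by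
    intro x
    rcases Int.even_or_odd x with h | h
    · exact Dvd.dvd.mul_right h.two_dvd _
    · have : Even (x - 1) := by rcases h with ⟨k, hk⟩; exact ⟨k, by omega⟩
      exact Dvd.dvd.mul_left this.two_dvd _
  -- the sum of m is 3d - 1
  have hsum : ∑ i, m i = 3 * d - 1 := by
    have e1 : (2:ℤ) * ((d-1)*(d-2)/2) = (d-1)*(d-2) := by
      have h := hdvd (d-1)
      rw [show (d-1)*((d-1)-1) = (d-1)*(d-2) by ring] at h
      exact Int.mul_ediv_cancel' h
    have e2 : (2:ℤ) * (∑ i, m i * (m i - 1) / 2) = ∑ i, m i * (m i - 1) := by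
      rw [Finset.mul_sum]
      exact Finset.sum_congr rfl fun i _ => Int.mul_ediv_cancel' (hdvd (m i))
    have heq : (d-1)*(d-2)/2 = ∑ i, m i * (m i - 1) / 2 := by linarith
    have h1 : (d-1)*(d-2) = ∑ i, m i * (m i - 1) := by rw [← e1, heq, e2]
    have hexp : ∑ i, m i * (m i - 1) = ∑ i, (m i)^2 - ∑ i, m i := by
      rw [← Finset.sum_sub_distrib]
      exact Finset.sum_congr rfl fun i _ => by ring
    nlinarith [h1, hexp, ha]
  have hne : Nonempty (Fin n) := ⟨⟨0, by omega⟩⟩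
  obtain ⟨i₁, -, hmax1⟩ := Finset.exists_max_image Finset.univ m Finset.univ_nonempty
  have hs1ne : (Finset.univ.erase i₁).Nonempty := by
    rw [← Finset.card_pos, Finset.card_erase_of_mem (Finset.mem_univ _),
      Finset.card_univ, Fintype.card_fin]
    omega
  obtain ⟨i₂, hi₂, hmax2⟩ := Finset.exists_max_image (Finset.univ.erase i₁) m hs1ne
  have hs2ne : ((Finset.univ.erase i₁).erase i₂).Nonempty := by
    rw [← Finset.card_pos, Finset.card_erase_of_mem hi₂,
      Finset.card_erase_of_mem (Finset.mem_univ _), Finset.card_univ, Fintype.card_fin]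
    omega
  obtain ⟨i₃, hi₃, hmax3⟩ :=
    Finset.exists_max_image ((Finset.univ.erase i₁).erase i₂) m hs2ne
  have h21 : i₂ ≠ i₁ := Finset.ne_of_mem_erase hi₂
  have h32 : i₃ ≠ i₂ := Finset.ne_of_mem_erase hi₃
  have hi₃' : i₃ ∈ Finset.univ.erase i₁ := Finset.mem_of_mem_erase hi₃
  have h31 : i₃ ≠ i₁ := Finset.ne_of_mem_erase hi₃'
  have split : ∀ f : Fin n → ℤ,
      ∑ i, f i = f i₁ + f i₂ + ∑ i ∈ (Finset.univ.erase i₁).erase i₂, f i := by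
    intro f
    rw [← Finset.add_sum_erase _ f (Finset.mem_univ i₁), ← Finset.add_sum_erase _ f hi₂]
    ring
  have hbd : ∑ i ∈ (Finset.univ.erase i₁).erase i₂, (m i)^2
      ≤ m i₃ * ∑ i ∈ (Finset.univ.erase i₁).erase i₂, m i := by
    rw [Finset.mul_sum]
    apply Finset.sum_le_sum
    intro i hi
    have h1 := hmax3 i hi
    have h2 := hm i
    nlinarith
  have hab : m i₂ ≤ m i₁ := hmax1 i₂ (Finset.mem_univ _)
  have hbc : m i₃ ≤ m i₂ := hmax2 i₃ hi₃'
  refine ⟨i₁, i₂, i₃, h21.symm, h31.symm, h32.symm, ?_⟩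
  by_contra hc
  push_neg at hc
  have hA := split m
  have hS := split (fun i => (m i)^2)
  rw [hsum] at hA
  rw [show ∑ i, (fun i => (m i)^2) i = ∑ i, (m i)^2 from rfl] at hS
  have hc0 := hm i₃
  nlinarith [mul_nonneg (by linarith : (0:ℤ) ≤ d - m i₁ - m i₂ - m i₃)
      (by linarith : (0:ℤ) ≤ 2 * m i₁ + 2 * m i₂ - m i₃),
    sq_nonneg (d - m i₁ - m i₂ - m i₃),
    mul_nonneg (by linarith : (0:ℤ) ≤ m i₁ - m i₃) (by linarith : (0:ℤ) ≤ m i₂ - m i₃),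
    mul_nonneg hc0 (by linarith : (0:ℤ) ≤ m i₁ - m i₃),
    mul_nonneg hc0 (by linarith : (0:ℤ) ≤ m i₂ - m i₃)]
end

section
/- If (d, m) satisfies d² - ∑ mᵢ² = -1 and 3d - ∑ mᵢ = 1, then its image (d', m') under any (i₁,i₂,i₃)-Cremona transformation also satisfies d'² - ∑ m'ᵢ² = -1 and 3d' - ∑ m'ᵢ = 1. -/
/-- The (i₁,i₂,i₃)-Cremona transformation on ℤ × (Fin n → ℤ). -/
def cremona {n : ℕ} (i₁ i₂ i₃ : Fin n) (p : ℤ × (Fin n → ℤ)) :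
    ℤ × (Fin n → ℤ) :=
  (2 * p.1 - p.2 i₁ - p.2 i₂ - p.2 i₃,
   fun j =>
     if j = i₁ then p.1 - p.2 i₂ - p.2 i₃
     else if j = i₂ then p.1 - p.2 i₁ - p.2 i₃
     else if j = i₃ then p.1 - p.2 i₁ - p.2 i₂
     else p.2 j)

lemma sum_split {n : ℕ} (i₁ i₂ i₃ : Fin n)
    (h12 : i₁ ≠ i₂) (h13 : i₁ ≠ i₃) (h23 : i₂ ≠ i₃) (f : Fin n → ℤ) :
    ∑ j, f j = f i₁ + f i₂ + f i₃ + ∑ j ∈ Finset.univ \ {i₁, i₂, i₃}, f j := by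
  rw [← Finset.sum_sdiff (Finset.subset_univ ({i₁, i₂, i₃} : Finset (Fin n)))]
  rw [Finset.sum_insert (by simp [h12, h13]), Finset.sum_pair h23]
  ring

theorem cremona_preserves_neg_one_conditions {n : ℕ} (i₁ i₂ i₃ : Fin n)
    (h12 : i₁ ≠ i₂) (h13 : i₁ ≠ i₃) (h23 : i₂ ≠ i₃)
    (d : ℤ) (m : Fin n → ℤ)
    (ha : d ^ 2 - ∑ i, (m i) ^ 2 = -1)
    (hc : 3 * d - ∑ i, m i = 1) :
    (cremona i₁ i₂ i₃ (d, m)).1 ^ 2 -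
      ∑ i, ((cremona i₁ i₂ i₃ (d, m)).2 i) ^ 2 = -1 ∧
    3 * (cremona i₁ i₂ i₃ (d, m)).1 -
      ∑ i, (cremona i₁ i₂ i₃ (d, m)).2 i = 1 := by
  set g := (cremona i₁ i₂ i₃ (d, m)).2 with hg
  have hrest : ∀ j ∈ Finset.univ \ ({i₁, i₂, i₃} : Finset (Fin n)), g j = m j := by
    intro j hj
    simp only [Finset.mem_sdiff, Finset.mem_insert, Finset.mem_singleton] at hj
    push_neg at hj
    simp [hg, cremona, hj.2.1, hj.2.2.1, hj.2.2.2]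
  have h1 : g i₁ = d - m i₂ - m i₃ := by simp [hg, cremona]
  have h2 : g i₂ = d - m i₁ - m i₃ := by simp [hg, cremona, Ne.symm h12]
  have h3 : g i₃ = d - m i₁ - m i₂ := by simp [hg, cremona, Ne.symm h13, Ne.symm h23]
  have hsq : ∑ j ∈ Finset.univ \ ({i₁, i₂, i₃} : Finset (Fin n)), g j ^ 2
      = ∑ j ∈ Finset.univ \ ({i₁, i₂, i₃} : Finset (Fin n)), m j ^ 2 :=
    Finset.sum_congr rfl fun j hj => by rw [hrest j hj]
  have hlin : ∑ j ∈ Finset.univ \ ({i₁, i₂, i₃} : Finset (Fin n)), g j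
      = ∑ j ∈ Finset.univ \ ({i₁, i₂, i₃} : Finset (Fin n)), m j :=
    Finset.sum_congr rfl hrest
  rw [sum_split i₁ i₂ i₃ h12 h13 h23 (fun j => m j ^ 2)] at ha
  rw [sum_split i₁ i₂ i₃ h12 h13 h23 m] at hc
  constructor
  · rw [sum_split i₁ i₂ i₃ h12 h13 h23 (fun j => g j ^ 2), hsq, h1, h2, h3]
    show (2 * d - m i₁ - m i₂ - m i₃) ^ 2 - _ = -1
    linear_combination ha
  · rw [sum_split i₁ i₂ i₃ h12 h13 h23 g, hlin, h1, h2, h3]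
    show 3 * (2 * d - m i₁ - m i₂ - m i₃) - _ = 1
    linear_combination hc
end
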